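/- If G is a connected d-regular graph on n vertices, then n ≥ (d+1)·diam(G)/3. -/

import Mathlib

/-- The `k`-th power of a simple graph `G`: two distinct vertices are adjacent
iff their distance in `G` is at most `k`. -/
def SimpleGraph.power {V : Type*} (G : SimpleGraph V) (k : ℕ) : SimpleGraph V where
  Adj u v := u ≠ v ∧ G.dist u v ≤ k
  symm := ⟨fun u v h => ⟨h.1.symm, by rw [SimpleGraph.dist_comm]; exact h.2⟩⟩
  loopless := ⟨fun v h => h.1 rfl⟩

open SimpleGraph Finset in
private lemma exists_walk_to_getVert {V : Type*} {G : SimpleGraph V} {u v : V}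
    (p : G.Walk u v) (i : ℕ) : ∃ r : G.Walk u (p.getVert i), r.length ≤ i := by
  induction p generalizing i with
  | nil =>
    rw [Walk.getVert_of_length_le _ (by simp)]
    exact ⟨Walk.nil, Nat.zero_le _⟩
  | cons h q ih =>
    cases i with
    | zero =>
      rw [Walk.getVert_zero]
      exact ⟨Walk.nil, Nat.zero_le _⟩
    | succ n =>
      rw [Walk.getVert_cons_succ]
      obtain ⟨r, hr⟩ := ih n
      exact ⟨Walk.cons h r, by simpa using hr⟩

private lemma dist_getVert_le {V : Type*} {G : SimpleGraph V} {u v : V}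
    (p : G.Walk u v) (i : ℕ) : G.dist u (p.getVert i) ≤ i := by
  obtain ⟨r, hr⟩ := exists_walk_to_getVert p i
  exact (SimpleGraph.dist_le r).trans hr

theorem card_ge_diam_bound {V : Type*} [Fintype V] (G : SimpleGraph V) (d : ℕ)
    (hconn : G.Connected) (hreg : ∀ v : V, (G.neighborSet v).ncard = d) :
    (d + 1) * G.diam ≤ 3 * Fintype.card V := by
  classical
  have hne : Nonempty V := hconn.nonempty
  obtain ⟨u, v, huv⟩ := G.exists_dist_eq_diam
  obtain ⟨p, hp⟩ := hconn.exists_walk_length_eq_dist u v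
  set D := G.diam with hD
  have hlen : p.length = D := by rw [hp, huv]
  set c : ℕ → V := fun i => p.getVert (3 * i) with hc
  set S : ℕ → Finset V := fun i => insert (c i) (G.neighborFinset (c i)) with hS
  have hcard : ∀ i, (S i).card = d + 1 := by
    intro i
    rw [hS]
    rw [Finset.card_insert_of_notMem (by simp)]
    have : (G.neighborFinset (c i)).card = d := by
      rw [SimpleGraph.neighborFinset_def, ← Set.ncard_eq_toFinset_card']
      exact hreg (c i)
    omega
  -- distance from any member of S i to c i is ≤ 1
  have hmem_dist : ∀ i w, w ∈ S i → G.dist (c i) w ≤ 1 := by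
    intro i w hw
    rw [hS, Finset.mem_insert] at hw
    rcases hw with rfl | hw
    · simp [SimpleGraph.dist_self]
    · have : G.Adj (c i) w := by simpa using hw
      exact le_of_eq (SimpleGraph.dist_eq_one_iff_adj.mpr this)
  -- dist u (c i) ≤ 3 i and dist (c i) v ≤ D - 3 i
  have hduc : ∀ i, G.dist u (c i) ≤ 3 * i := fun i => dist_getVert_le p (3 * i)
  have hdcv : ∀ i, 3 * i ≤ D → G.dist (c i) v ≤ D - 3 * i := by
    intro i hi
    have h1 : p.reverse.getVert (D - 3 * i) = c i := by
      rw [SimpleGraph.Walk.getVert_reverse, hlen, hc]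
      congr 1
      omega
    have := dist_getVert_le p.reverse (D - 3 * i)
    rw [h1] at this
    rwa [SimpleGraph.dist_comm]
  -- disjointness
  have hdisj : ∀ i ∈ Finset.range (D / 3 + 1), ∀ j ∈ Finset.range (D / 3 + 1),
      i ≠ j → Disjoint (S i) (S j) := by
    intro i hi j hj hij
    rw [Finset.mem_range] at hi hj
    rw [Finset.disjoint_left]
    intro w hwi hwj
    -- wlog i < j
    have key : ∀ a b : ℕ, a < b → b ≤ D / 3 → w ∈ S a → w ∈ S b → False := by
      intro a b hab hbD hwa hwb
      have h3b : 3 * b ≤ D := by omega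
      have htri : G.dist u v ≤ G.dist u (c a) + (G.dist (c a) w + (G.dist w (c b) +
          G.dist (c b) v)) := by
        calc G.dist u v ≤ G.dist u (c a) + G.dist (c a) v := hconn.dist_triangle
          _ ≤ G.dist u (c a) + (G.dist (c a) w + G.dist w (c b) + G.dist (c b) v) := by
              have h1 : G.dist (c a) v ≤ G.dist (c a) w + G.dist w v := hconn.dist_triangle
              have h2 : G.dist w v ≤ G.dist w (c b) + G.dist (c b) v := hconn.dist_triangle
              omega
          _ = _ := by ring
      have e1 := hduc a
      have e2 := hmem_dist a w hwa
      have e3 : G.dist w (c b) ≤ 1 := by rw [SimpleGraph.dist_comm]; exact hmem_dist b w hwb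
      have e4 := hdcv b h3b
      rw [huv] at htri
      omega
    rcases lt_or_gt_of_ne hij with h | h
    · exact key i j h (by omega) hwi hwj
    · exact key j i h (by omega) hwj hwi
  have hsum : (D / 3 + 1) * (d + 1) ≤ Fintype.card V := by
    calc (D / 3 + 1) * (d + 1)
        = ∑ i ∈ Finset.range (D / 3 + 1), (S i).card := by
          simp [hcard, Finset.sum_const, mul_comm]
      _ = ((Finset.range (D / 3 + 1)).biUnion S).card :=
          (Finset.card_biUnion hdisj).symm
      _ ≤ Fintype.card V := Finset.card_le_univ _
  have h3 : D ≤ 3 * (D / 3 + 1) := by omega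
  calc (d + 1) * D ≤ (d + 1) * (3 * (D / 3 + 1)) := Nat.mul_le_mul_left _ h3
    _ = 3 * ((D / 3 + 1) * (d + 1)) := by ring
    _ ≤ 3 * Fintype.card V := Nat.mul_le_mul_left _ hsum
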